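/- For the directed graph on Z^2 with edges from (x,y) to (x+1,y), (x,y+1), and (x-1,y-1), where traversing an edge forwards costs 1/3 and backwards costs 2/3, the minimal cost of a path from the origin to a point (x,y) equals max{x+y, y-2x, x-2y}/3. -/

import Mathlib

/-- The forward steps of the directed graph `Γ` on `ℤ × ℤ`:
from `(x,y)` there are edges to `(x+1,y)`, `(x,y+1)`, `(x-1,y-1)`. -/
def fwdSteps : List (ℤ × ℤ) := [(1, 0), (0, 1), (-1, -1)]

/-- A step of a path: an edge traversed either forwards or backwards. -/
def IsStep (s : ℤ × ℤ) : Prop := s ∈ fwdSteps ∨ -s ∈ fwdSteps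

/-- The cost of a step: `1/3` forwards, `2/3` backwards. -/
noncomputable def stepCost (s : ℤ × ℤ) : ℝ :=
  if s ∈ fwdSteps then 1/3 else 2/3

/-- The length of a path, given as its list of steps. -/
noncomputable def pathLen (l : List (ℤ × ℤ)) : ℝ := (l.map stepCost).sum

/-- The set of lengths of paths from `a` to `b` in `Γ`. -/
def pathLengths (a b : ℤ × ℤ) : Set ℝ :=
  {c | ∃ l : List (ℤ × ℤ), (∀ s ∈ l, IsStep s) ∧ a + l.sum = b ∧ pathLen l = c}

/-- The asymmetric distance on `Γ`: the infimum (in fact minimum) of path lengths. -/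
noncomputable def latticeDist (a b : ℤ × ℤ) : ℝ := sInf (pathLengths a b)

lemma stepCost_bound (p q : ℤ)
    (hpq : (p, q) = (1, 1) ∨ (p, q) = (-2, 1) ∨ (p, q) = (1, -2))
    (s : ℤ × ℤ) (hs : IsStep s) :
    ((p * s.1 + q * s.2 : ℤ) : ℝ) ≤ 3 * stepCost s := by
  obtain ⟨a, b⟩ := s
  simp only [Prod.mk.injEq] at hpq
  have hs' : (a = 1 ∧ b = 0) ∨ (a = 0 ∧ b = 1) ∨ (a = -1 ∧ b = -1) ∨
      (a = -1 ∧ b = 0) ∨ (a = 0 ∧ b = -1) ∨ (a = 1 ∧ b = 1) := by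
    simp only [IsStep, fwdSteps, List.mem_cons, List.not_mem_nil, or_false,
      Prod.neg_mk, Prod.mk.injEq] at hs
    omega
  obtain ⟨rfl, rfl⟩ | ⟨rfl, rfl⟩ | ⟨rfl, rfl⟩ | ⟨rfl, rfl⟩ | ⟨rfl, rfl⟩ | ⟨rfl, rfl⟩ :=
    hs' <;>
  obtain ⟨rfl, rfl⟩ | ⟨rfl, rfl⟩ | ⟨rfl, rfl⟩ := hpq <;>
  norm_num [stepCost, fwdSteps, Prod.ext_iff]

lemma pathLen_bound (p q : ℤ)
    (hpq : (p, q) = (1, 1) ∨ (p, q) = (-2, 1) ∨ (p, q) = (1, -2))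
    (l : List (ℤ × ℤ)) (hl : ∀ s ∈ l, IsStep s) :
    ((p * l.sum.1 + q * l.sum.2 : ℤ) : ℝ) ≤ 3 * pathLen l := by
  induction l with
  | nil => simp [pathLen]
  | cons s t ih =>
    have h1 := stepCost_bound p q hpq s (hl s (by simp))
    have h2 := ih fun u hu => hl u (by simp [hu])
    simp only [List.sum_cons, Prod.fst_add, Prod.snd_add, pathLen, List.map_cons,
      List.sum_cons] at *
    push_cast at *
    linarith

lemma pathLen_replicate (n : ℕ) (s : ℤ × ℤ) (hs : s ∈ fwdSteps) :
    pathLen (List.replicate n s) = n / 3 := by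
  simp [pathLen, List.map_replicate, List.sum_replicate, stepCost, hs]
  ring

lemma exists_optimal (x y : ℤ) : ∃ l : List (ℤ × ℤ), (∀ s ∈ l, IsStep s) ∧
    (0, 0) + l.sum = (x, y) ∧
    pathLen l = ((max (x + y) (max (y - 2 * x) (x - 2 * y)) : ℤ) : ℝ) / 3 := by
  set c : ℕ := (max 0 (max (-x) (-y))).toNat with hc
  set a : ℕ := (x + c).toNat with ha
  set b : ℕ := (y + c).toNat with hb
  have hac : (a : ℤ) = x + c := by omega
  have hbc : (b : ℤ) = y + c := by omega
  refine ⟨List.replicate a (1, 0) ++ List.replicate b (0, 1) ++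
    List.replicate c (-1, -1), ?_, ?_, ?_⟩
  · intro s hs
    simp only [List.mem_append, List.mem_replicate] at hs
    rcases hs with (⟨-, rfl⟩ | ⟨-, rfl⟩) | ⟨-, rfl⟩ <;> simp [IsStep, fwdSteps]
  · simp only [List.sum_append, List.sum_replicate, Prod.ext_iff, Prod.fst_add,
      Prod.snd_add, Prod.smul_mk, smul_eq_mul, Prod.fst_zero, Prod.snd_zero]
    constructor <;> push_cast <;> simp <;> omega
  · rw [pathLen, List.map_append, List.map_append, List.sum_append, List.sum_append]
    rw [← pathLen, ← pathLen, ← pathLen]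
    rw [pathLen_replicate _ _ (by simp [fwdSteps]), pathLen_replicate _ _ (by simp [fwdSteps]),
      pathLen_replicate _ _ (by simp [fwdSteps])]
    have h1 : (a : ℤ) + b + c = max (x + y) (max (y - 2 * x) (x - 2 * y)) := by omega
    have h2 : ((a : ℝ)) + b + c = ((max (x + y) (max (y - 2 * x) (x - 2 * y)) : ℤ) : ℝ) := by
      exact_mod_cast h1
    linarith

/-- the minimal cost of a path from the origin to `(x,y)` equals
`max {x+y, y-2x, x-2y} / 3`, and this infimum is attained. -/
theorem lattice_dist_formula (x y : ℤ) :
    latticeDist (0, 0) (x, y) =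
      ((max (x + y) (max (y - 2 * x) (x - 2 * y)) : ℤ) : ℝ) / 3 ∧
    latticeDist (0, 0) (x, y) ∈ pathLengths (0, 0) (x, y) := by
  have hmem : ((max (x + y) (max (y - 2 * x) (x - 2 * y)) : ℤ) : ℝ) / 3 ∈
      pathLengths (0, 0) (x, y) := exists_optimal x y
  have hlb : ∀ d ∈ pathLengths (0, 0) (x, y),
      ((max (x + y) (max (y - 2 * x) (x - 2 * y)) : ℤ) : ℝ) / 3 ≤ d := by
    rintro d ⟨l, hl, hsum, rfl⟩
    have hsum' : l.sum = (x, y) := by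
      rw [← hsum]; exact (zero_add l.sum).symm
    have h1 := pathLen_bound 1 1 (Or.inl rfl) l hl
    have h2 := pathLen_bound (-2) 1 (Or.inr (Or.inl rfl)) l hl
    have h3 := pathLen_bound 1 (-2) (Or.inr (Or.inr rfl)) l hl
    rw [hsum'] at h1 h2 h3
    simp only at h1 h2 h3
    push_cast at h1 h2 h3 ⊢
    rw [div_le_iff₀ (by norm_num : (0:ℝ) < 3)]
    apply max_le (by linarith) (max_le (by linarith) (by linarith))
  have heq : latticeDist (0, 0) (x, y) =
      ((max (x + y) (max (y - 2 * x) (x - 2 * y)) : ℤ) : ℝ) / 3 := by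
    refine le_antisymm (csInf_le ⟨_, hlb⟩ hmem) (le_csInf ⟨_, hmem⟩ hlb)
  exact ⟨heq, heq ▸ hmem⟩
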